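/- Let g ∈ k[x₁,…,xₙ] be a polynomial of degree d and p ∈ V(g). Suppose there is a subset 𝓛 of the projective space ℙⁿ⁻¹ of directions of lines through p, dense in the Zariski topology, such that for every direction in 𝓛 the corresponding line l through p satisfies I_p(l, V(g)) = d. Then g vanishes at p with multiplicity exactly d; equivalently, g(x + p) is homogeneous of degree d. -/

import Mathlib

/-- The restriction of a polynomial `g` to the parametrized line `t ↦ p + t • v`,
as a polynomial in `t`. -/
noncomputable def lineEval {k : Type*} [Field k] {n : ℕ} (g : MvPolynomial (Fin n) k)
    (p v : Fin n → k) : Polynomial k :=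
  MvPolynomial.aeval (fun i => Polynomial.C (p i) + Polynomial.C (v i) * Polynomial.X) g

/-- Coefficient of `t^j` in the substitution `xᵢ ↦ vᵢ t` is the evaluation at `v` of the
`j`-th homogeneous component. -/
lemma my_coeff_aeval_C_mul_X {k : Type*} [CommSemiring k] {n : ℕ} (h : MvPolynomial (Fin n) k)
    (v : Fin n → k) (j : ℕ) :
    (MvPolynomial.aeval (fun i => Polynomial.C (v i) * Polynomial.X) h).coeff j
      = MvPolynomial.eval v (MvPolynomial.homogeneousComponent j h) := by
  rw [MvPolynomial.aeval_def, MvPolynomial.eval₂_eq, MvPolynomial.homogeneousComponent_apply,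
    map_sum, Polynomial.finset_sum_coeff, Finset.sum_filter]
  refine Finset.sum_congr rfl fun m hm => ?_
  have : ∏ i ∈ m.support, (Polynomial.C (v i) * Polynomial.X) ^ m i
      = Polynomial.C (∏ i ∈ m.support, v i ^ m i) * Polynomial.X ^ m.degree := by
    simp_rw [mul_pow, Finset.prod_mul_distrib, map_prod, map_pow, Finsupp.degree,
      Finset.prod_pow_eq_pow_sum]
    rfl
  rw [this, Polynomial.algebraMap_eq, ← mul_assoc, ← map_mul, Polynomial.coeff_C_mul,
    Polynomial.coeff_X_pow, MvPolynomial.eval_monomial]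
  by_cases hd : m.degree = j
  · simp [hd, Finsupp.prod, mul_comm]
  · simp [hd, Ne.symm hd, Finsupp.prod]

/-- A homogeneous polynomial of degree `j` scales by `c ^ j` under `v ↦ c • v`. -/
lemma my_eval_smul {k : Type*} [CommSemiring k] {n j : ℕ} {q : MvPolynomial (Fin n) k}
    (hq : q.IsHomogeneous j) (c : k) (v : Fin n → k) :
    MvPolynomial.eval (c • v) q = c ^ j * MvPolynomial.eval v q := by
  rw [MvPolynomial.eval_eq, MvPolynomial.eval_eq, Finset.mul_sum]
  refine Finset.sum_congr rfl fun m hm => ?_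
  have hd : m.degree = j := by
    rw [Finsupp.degree_eq_weight_one]
    exact hq (MvPolynomial.mem_support_iff.mp hm)
  simp only [Pi.smul_apply, smul_eq_mul, mul_pow, Finset.prod_mul_distrib,
    Finset.prod_pow_eq_pow_sum]
  rw [show ∑ i ∈ m.support, m i = j from hd]
  ring

/-- Translation does not increase the total degree. -/
lemma my_totalDegree_shift_le {k : Type*} [CommRing k] [Nontrivial k] {n : ℕ}
    (g : MvPolynomial (Fin n) k) (p : Fin n → k) :
    (MvPolynomial.aeval (fun i => MvPolynomial.X i + MvPolynomial.C (p i)) g).totalDegree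
      ≤ g.totalDegree := by
  conv_lhs => rw [g.as_sum, map_sum]
  apply MvPolynomial.totalDegree_finsetSum_le
  intro m hm
  rw [MvPolynomial.aeval_monomial]
  refine le_trans (MvPolynomial.totalDegree_mul _ _) ?_
  have h1 : (algebraMap k (MvPolynomial (Fin n) k) (MvPolynomial.coeff m g)).totalDegree = 0 := by
    rw [MvPolynomial.algebraMap_eq, MvPolynomial.totalDegree_C]
  rw [h1, zero_add, Finsupp.prod]
  refine le_trans (MvPolynomial.totalDegree_finset_prod _ _) ?_
  refine le_trans (Finset.sum_le_sum (fun i _ => MvPolynomial.totalDegree_pow _ (m i))) ?_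
  have h2 : ∀ i : Fin n,
      (MvPolynomial.X i + MvPolynomial.C (p i) : MvPolynomial (Fin n) k).totalDegree ≤ 1 := by
    intro i
    refine le_trans (MvPolynomial.totalDegree_add _ _) ?_
    simp [MvPolynomial.totalDegree_X, MvPolynomial.totalDegree_C]
  refine le_trans (Finset.sum_le_sum (fun i _ => Nat.mul_le_mul_left (m i) (h2 i))) ?_
  simp only [mul_one]
  exact MvPolynomial.le_totalDegree hm

/-- Let `g ∈ k[x₁,…,xₙ]` be a polynomial of degree `d` and `p ∈ V(g)`.  Suppose there is a
set `𝓛 = D` of (nonzero) directions of lines through `p`, dense in the Zariski topology of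
the projective space `ℙⁿ⁻¹` of directions (i.e. the affine cone over `D` is dense in `kⁿ`:
its vanishing ideal is zero), such that for every direction `v ∈ D` the line
`l = {p + t v}` satisfies `I_p(l, V(g)) = d` (the polynomial `g(p + t v) ∈ k[t]` vanishes
at `t = 0` to order exactly `d`).  Then `g` vanishes at `p` with multiplicity exactly `d`;
equivalently, `g(x + p)` is homogeneous of degree `d`. -/
theorem homogeneous_of_dense_max_intersection_multiplicity {k : Type*} [Field k]
    [IsAlgClosed k] {n d : ℕ} (g : MvPolynomial (Fin n) k) (hdeg : g.totalDegree = d)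
    (p : Fin n → k) (hp : MvPolynomial.eval p g = 0)
    (D : Set (Fin n → k)) (hD0 : ∀ v ∈ D, v ≠ 0)
    (hdense : MvPolynomial.vanishingIdeal k
      (insert (0 : Fin n → k) {y : Fin n → k | ∃ c : k, ∃ v ∈ D, y = c • v}) = ⊥)
    (hI : ∀ v ∈ D, Polynomial.X ^ d ∣ lineEval g p v ∧
      ¬ Polynomial.X ^ (d + 1) ∣ lineEval g p v) :
    (MvPolynomial.aeval (fun i => MvPolynomial.X i + MvPolynomial.C (p i))
      g).IsHomogeneous d := by
  classical
  set h : MvPolynomial (Fin n) k :=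
    MvPolynomial.aeval (fun i => MvPolynomial.X i + MvPolynomial.C (p i)) g with hh
  -- restriction of `h` to the line through the origin with direction `v` is `lineEval g p v`
  have hline : ∀ v : Fin n → k,
      MvPolynomial.aeval (fun i => Polynomial.C (v i) * Polynomial.X) h = lineEval g p v := by
    intro v
    rw [hh, ← AlgHom.comp_apply, lineEval]
    congr 1
    apply MvPolynomial.algHom_ext
    intro i
    simp [add_comm]
  -- constant term of `h` is zero
  have hc0 : MvPolynomial.coeff 0 h = 0 := by
    have heval0 : MvPolynomial.eval (0 : Fin n → k) h = 0 := by
      rw [hh, MvPolynomial.aeval_def, MvPolynomial.eval_eval₂]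
      simp only [MvPolynomial.eval_add, MvPolynomial.eval_X, MvPolynomial.eval_C, Pi.zero_apply,
        zero_add]
      rw [← hp, ← MvPolynomial.eval₂_id (g := p)]
      congr 1
      ext x
      simp
    rw [← MvPolynomial.constantCoeff_eq, ← MvPolynomial.eval_zero]
    exact heval0
  -- all homogeneous components of degree `< d` vanish
  have hzero : ∀ j, j < d → MvPolynomial.homogeneousComponent j h = 0 := by
    intro j hj
    have hmem : MvPolynomial.homogeneousComponent j h ∈ MvPolynomial.vanishingIdeal k
        (insert (0 : Fin n → k) {y : Fin n → k | ∃ c : k, ∃ v ∈ D, y = c • v}) := by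
      rw [MvPolynomial.mem_vanishingIdeal_iff]
      change ∀ x ∈ _, MvPolynomial.eval x _ = 0
      rintro x (rfl | ⟨c, v, hv, rfl⟩)
      · rcases Nat.eq_zero_or_pos j with rfl | hj0
        · rw [MvPolynomial.homogeneousComponent_zero, MvPolynomial.eval_C]
          exact hc0
        · have := my_eval_smul (MvPolynomial.homogeneousComponent_isHomogeneous j h)
            (0 : k) (0 : Fin n → k)
          rw [smul_zero] at this
          rw [this, zero_pow hj0.ne', zero_mul]
      · rw [my_eval_smul (MvPolynomial.homogeneousComponent_isHomogeneous j h) c v]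
        obtain ⟨r, hr⟩ := (hI v hv).1
        have hcoeff : (lineEval g p v).coeff j = 0 := by
          rw [hr, mul_comm, Polynomial.coeff_mul_X_pow']
          simp [Nat.not_le.mpr hj]
        rw [← hline v, my_coeff_aeval_C_mul_X] at hcoeff
        rw [hcoeff, mul_zero]
    rw [hdense, Ideal.mem_bot] at hmem
    exact hmem
  -- `h` equals its degree-`d` homogeneous component
  have hle : h.totalDegree ≤ d := hdeg ▸ my_totalDegree_shift_le g p
  have hsum := MvPolynomial.sum_homogeneousComponent h
  have hext : ∑ i ∈ Finset.range (d + 1), MvPolynomial.homogeneousComponent i h = h := by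
    refine Eq.trans ?_ hsum
    refine (Finset.sum_subset (Finset.range_subset_range.mpr (by omega)) ?_).symm
    intro i _ hi
    simp only [Finset.mem_range, not_lt] at hi
    exact MvPolynomial.homogeneousComponent_eq_zero _ _ (Nat.lt_of_succ_le hi)
  have hhd : h = MvPolynomial.homogeneousComponent d h := by
    conv_lhs => rw [← hext]
    rw [Finset.sum_range_succ,
      Finset.sum_eq_zero fun i hi => hzero i (Finset.mem_range.mp hi), zero_add]
  rw [hhd]
  exact MvPolynomial.homogeneousComponent_isHomogeneous d h
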